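/- Fix naturals n, k with k ≤ n, and define p(x) = ∏_{i=0}^{k-1} (n-x-i)/(n-i) as a real function of real x on [0, n-k+1]. Then the second derivative p''(x) = Σ_{i=0}^{k-1} Σ_{j≠i} p(x) / ((n-x-i)(n-x-j)) is nonnegative on [0, n-k], i.e., p is convex there. -/

import Mathlib

lemma avoid_aux (n k : ℕ) (hk : k ≤ n) :
    ∀ m : ℕ, m ≤ k →
    ConvexOn ℝ (Set.Icc (0 : ℝ) ((n : ℝ) - k))
        (fun x => ∏ i ∈ Finset.range m, ((n : ℝ) - x - i) / ((n : ℝ) - i)) ∧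
      AntitoneOn (fun x => ∏ i ∈ Finset.range m, ((n : ℝ) - x - i) / ((n : ℝ) - i))
        (Set.Icc (0 : ℝ) ((n : ℝ) - k)) ∧
      ∀ x ∈ Set.Icc (0 : ℝ) ((n : ℝ) - k),
        0 ≤ ∏ i ∈ Finset.range m, ((n : ℝ) - x - i) / ((n : ℝ) - i) := by
  intro m
  induction m with
  | zero =>
    intro _
    refine ⟨?_, ?_, ?_⟩
    · simpa using (convexOn_const (1 : ℝ) (convex_Icc _ _))
    · intro a _ b _ _; simp
    · intro x _; simp
  | succ m ih =>
    intro hm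
    have hm' : m ≤ k := Nat.le_of_succ_le hm
    obtain ⟨hconv, hanti, hnn⟩ := ih hm'
    set q : ℝ → ℝ := fun x => ∏ i ∈ Finset.range m, ((n : ℝ) - x - i) / ((n : ℝ) - i) with hq
    have hmlt : (m : ℝ) < n := by
      exact_mod_cast lt_of_lt_of_le hm (by exact_mod_cast hk)
    have hden : (0 : ℝ) < (n : ℝ) - m := by linarith
    set g : ℝ → ℝ := fun x => ((n : ℝ) - x - m) / ((n : ℝ) - m) with hg
    have hgconv : ConvexOn ℝ (Set.Icc (0 : ℝ) ((n : ℝ) - k)) g := by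
      refine ⟨convex_Icc _ _, fun a _ b _ u v hu hv huv => le_of_eq ?_⟩
      simp only [hg, smul_eq_mul]
      field_simp
      nlinarith [huv]
    have hganti : AntitoneOn g (Set.Icc (0 : ℝ) ((n : ℝ) - k)) := by
      intro a _ b _ hab
      simp only [hg]
      rw [div_le_div_iff₀ hden hden]
      nlinarith
    have hgnn : ∀ x ∈ Set.Icc (0 : ℝ) ((n : ℝ) - k), 0 ≤ g x := by
      intro x hx
      have hx2 := hx.2
      have hmk : (m : ℝ) ≤ k := by exact_mod_cast hm'
      exact div_nonneg (by linarith) hden.le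
    have hmono : MonovaryOn q g (Set.Icc (0 : ℝ) ((n : ℝ) - k)) :=
      hanti.monovaryOn hganti
    have hprod : (fun x => ∏ i ∈ Finset.range (m + 1), ((n : ℝ) - x - i) / ((n : ℝ) - i))
        = q * g := by
      funext x
      simp only [Pi.mul_apply, hq, hg]
      rw [Finset.prod_range_succ]
    rw [hprod]
    refine ⟨hconv.mul hgconv hnn hgnn hmono, ?_, ?_⟩
    · intro a ha b hb hab
      have := mul_le_mul (hanti ha hb hab) (hganti ha hb hab) (hgnn b hb) (hnn a ha)
      simpa using this
    · intro x hx
      rw [Finset.prod_range_succ]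
      exact mul_nonneg (hnn x hx) (hgnn x hx)

theorem avoid_prob_convex (n k : ℕ) (hk : k ≤ n) :
    let p : ℝ → ℝ := fun x => ∏ i ∈ Finset.range k, ((n : ℝ) - x - i) / ((n : ℝ) - i)
    (∀ x ∈ Set.Icc (0 : ℝ) ((n : ℝ) - k),
        0 ≤ ∑ i ∈ Finset.range k, ∑ j ∈ (Finset.range k).erase i,
          p x / ((((n : ℝ) - x - i)) * (((n : ℝ) - x - j)))) ∧
      ConvexOn ℝ (Set.Icc (0 : ℝ) ((n : ℝ) - k)) p := by
  intro p
  obtain ⟨hconv, -, hnn⟩ := avoid_aux n k hk k le_rfl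
  refine ⟨?_, hconv⟩
  intro x hx
  apply Finset.sum_nonneg
  intro i hi
  apply Finset.sum_nonneg
  intro j hj
  have hi' : i < k := Finset.mem_range.mp hi
  have hj' : j < k := Finset.mem_range.mp (Finset.mem_of_mem_erase hj)
  have hpos : ∀ l : ℕ, l < k → (0 : ℝ) < (n : ℝ) - x - l := by
    intro l hl
    have h1 : (l : ℝ) + 1 ≤ k := by exact_mod_cast hl
    have := hx.2
    linarith
  exact div_nonneg (hnn x hx) (mul_nonneg (hpos i hi').le (hpos j hj').le)
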